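/- Privacy of noisy argmax from privacy of one-dimensional noise addition: suppose the noise distribution Z on ℝ satisfies Pr[Z ≥ r] ≤ e^ε Pr[Z ≥ r+1] + δ for all r ∈ ℝ. Let c, c' ∈ ℝ^N be count vectors satisfying c'_j ≤ c_j ≤ c'_j + 1 for all j (monotonicity and Lipschitz). Then for each index i, with independent noise Y₁,...,Y_N ∼ Z, Pr[argmax_j(c_j + Y_j) = i] ≤ e^ε Pr[argmax_j(c'_j + Y_j) = i] + δ and Pr[argmax_j(c'_j + Y_j) = i] ≤ e^ε Pr[argmax_j(c_j + Y_j) = i] + δ. -/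

import Mathlib

open MeasureTheory ProbabilityTheory

section Aux

variable {ε δ : ℝ} (ρ : Measure ℝ) [IsProbabilityMeasure ρ]

lemma aux_one_le (hpriv : ∀ r : ℝ, ρ (Set.Ici r) ≤ ENNReal.ofReal (Real.exp ε) * ρ (Set.Ici (r + 1))
    + ENNReal.ofReal δ) :
    (1 : ENNReal) ≤ ENNReal.ofReal (Real.exp ε) + ENNReal.ofReal δ := by
  have hU : (Set.univ : Set ℝ) = ⋃ n : ℕ, Set.Ici (-(n : ℝ)) := by
    ext x
    simp only [Set.mem_univ, Set.mem_iUnion, Set.mem_Ici, true_iff]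
    obtain ⟨n, hn⟩ := exists_nat_ge (-x)
    exact ⟨n, by linarith⟩
  have hmono : Monotone fun n : ℕ => Set.Ici (-(n : ℝ)) := by
    intro m n hmn
    exact Set.Ici_subset_Ici.2 (by exact_mod_cast neg_le_neg (by exact_mod_cast hmn))
  have h1 : (1 : ENNReal) = ρ Set.univ := (measure_univ (μ := ρ)).symm
  rw [h1, hU, hmono.directed_le.measure_iUnion]
  refine iSup_le fun n => (hpriv _).trans ?_
  gcongr
  · exact le_trans (mul_le_mul_right prob_le_one _) (by simp)

lemma aux_oneD (hpriv : ∀ r : ℝ, ρ (Set.Ici r) ≤ ENNReal.ofReal (Real.exp ε) * ρ (Set.Ici (r + 1))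
    + ENNReal.ofReal δ) {r r' : ℝ} (h : r ≤ r' + 1) :
    ρ (Set.Ioi r') ≤ ENNReal.ofReal (Real.exp ε) * ρ (Set.Ioi r) + ENNReal.ofReal δ := by
  have hU : Set.Ioi r' = ⋃ n : ℕ, Set.Ici (r' + 1 / (n + 1)) := by
    ext x
    simp only [Set.mem_Ioi, Set.mem_iUnion, Set.mem_Ici]
    constructor
    · intro hx
      obtain ⟨n, hn⟩ := exists_nat_one_div_lt (sub_pos.2 hx)
      exact ⟨n, by linarith⟩
    · rintro ⟨n, hn⟩
      have : (0 : ℝ) < 1 / (n + 1) := by positivity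
      linarith
  have hmono : Monotone fun n : ℕ => Set.Ici (r' + 1 / ((n : ℝ) + 1)) := by
    intro m n hmn
    refine Set.Ici_subset_Ici.2 ?_
    have : (1 : ℝ) / ((n : ℝ) + 1) ≤ 1 / ((m : ℝ) + 1) := by
      apply one_div_le_one_div_of_le (by positivity)
      exact_mod_cast add_le_add_left (by exact_mod_cast hmn) 1
    linarith
  rw [hU, hmono.directed_le.measure_iUnion]
  refine iSup_le fun n => (hpriv _).trans ?_
  gcongr
  have : (0 : ℝ) < 1 / ((n : ℝ) + 1) := by positivity
  linarith

lemma aux_slice (hpriv : ∀ r : ℝ, ρ (Set.Ici r) ≤ ENNReal.ofReal (Real.exp ε) * ρ (Set.Ici (r + 1))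
    + ENNReal.ofReal δ) {n : ℕ} (a a' : Fin n → ℝ) (h : ∀ k, a k ≤ a' k + 1) :
    ρ (⋂ k, Set.Ioi (a' k)) ≤ ENNReal.ofReal (Real.exp ε) * ρ (⋂ k, Set.Ioi (a k))
      + ENNReal.ofReal δ := by
  rcases Nat.eq_zero_or_pos n with hn | hn
  · subst hn
    simp only [Set.iInter_of_empty, measure_univ, mul_one]
    exact aux_one_le ρ hpriv
  · have : Nonempty (Fin n) := Fin.pos_iff_nonempty.1 hn
    have hne : (Finset.univ : Finset (Fin n)).Nonempty := Finset.univ_nonempty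
    have hIoi : ∀ b : Fin n → ℝ, (⋂ k, Set.Ioi (b k)) = Set.Ioi (Finset.univ.sup' hne b) := by
      intro b
      ext x
      simp [Set.mem_iInter, Finset.sup'_lt_iff]
    rw [hIoi, hIoi]
    refine aux_oneD ρ hpriv ?_
    refine Finset.sup'_le _ _ fun k _ => ?_
    exact le_trans (h k) (add_le_add_left (Finset.le_sup' _ (Finset.mem_univ k)) 1)

end Aux

theorem stmt_15 (Ω : Type*) [MeasureSpace Ω] [IsProbabilityMeasure (ℙ : Measure Ω)]
    (N : ℕ) (hN : 0 < N) (ε δ : ℝ) (hδ : 0 ≤ δ)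
    (ρ : Measure ℝ) [IsProbabilityMeasure ρ]
    (hpriv : ∀ r : ℝ, ρ (Set.Ici r) ≤ ENNReal.ofReal (Real.exp ε) * ρ (Set.Ici (r + 1))
        + ENNReal.ofReal δ)
    (Y : Fin N → Ω → ℝ) (hYmeas : ∀ j, Measurable (Y j))
    (hindep : iIndepFun Y ℙ)
    (hlaw : ∀ j, (ℙ : Measure Ω).map (Y j) = ρ)
    (c c' : Fin N → ℝ) (hmono : ∀ j, c' j ≤ c j) (hlip : ∀ j, c j ≤ c' j + 1)
    (i : Fin N) :
    (ℙ : Measure Ω) {ω | ∀ j, j ≠ i → c j + Y j ω < c i + Y i ω}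
        ≤ ENNReal.ofReal (Real.exp ε) *
          (ℙ : Measure Ω) {ω | ∀ j, j ≠ i → c' j + Y j ω < c' i + Y i ω}
        + ENNReal.ofReal δ ∧
    (ℙ : Measure Ω) {ω | ∀ j, j ≠ i → c' j + Y j ω < c' i + Y i ω}
        ≤ ENNReal.ofReal (Real.exp ε) *
          (ℙ : Measure Ω) {ω | ∀ j, j ≠ i → c j + Y j ω < c i + Y i ω}
        + ENNReal.ofReal δ := by
  obtain ⟨n, rfl⟩ : ∃ n, N = n + 1 := ⟨N - 1, by omega⟩
  set J : Ω → (Fin (n + 1) → ℝ) := fun ω j => Y j ω with hJ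
  have hJmeas : Measurable J := measurable_pi_lambda _ hYmeas
  -- joint law is the product measure
  have hmap : (ℙ : Measure Ω).map J = Measure.pi fun _ : Fin (n + 1) => ρ := by
    refine (Measure.pi_eq fun s hs => ?_).symm
    rw [Measure.map_apply hJmeas (MeasurableSet.univ_pi hs)]
    have hpre : J ⁻¹' Set.pi Set.univ s = ⋂ j, Y j ⁻¹' s j := by
      ext ω; simp [Set.mem_pi, hJ]
    rw [hpre]
    have := (iIndepFun_iff_measure_inter_preimage_eq_mul.1 hindep) Finset.univ
      (sets := s) (fun j _ => hs j)
    simp only [Finset.mem_univ, Set.iInter_true, Set.biInter_univ] at this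
    rw [this]
    refine Finset.prod_congr rfl fun j _ => ?_
    rw [← hlaw j, Measure.map_apply (hYmeas j) (hs j)]
  -- generic one-sided inequality
  have key : ∀ d d' : Fin (n + 1) → ℝ, (∀ j, d j - d i ≤ (d' j - d' i) + 1) →
      (ℙ : Measure Ω) {ω | ∀ j, j ≠ i → d' j + Y j ω < d' i + Y i ω}
        ≤ ENNReal.ofReal (Real.exp ε) *
          (ℙ : Measure Ω) {ω | ∀ j, j ≠ i → d j + Y j ω < d i + Y i ω}
        + ENNReal.ofReal δ := by
    intro d d' hd
    set S : (Fin (n + 1) → ℝ) → Set (Fin (n + 1) → ℝ) :=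
      fun b => {x | ∀ j, j ≠ i → b j + x j < b i + x i} with hS
    have hSmeas : ∀ b, MeasurableSet (S b) := by
      intro b
      have : S b = ⋂ j, ⋂ _ : j ≠ i, {x : Fin (n + 1) → ℝ | b j + x j < b i + x i} := by
        ext x; simp [hS]
      rw [this]
      refine MeasurableSet.iInter fun j => MeasurableSet.iInter fun _ => ?_
      exact measurableSet_lt (measurable_const.add (measurable_pi_apply j))
        (measurable_const.add (measurable_pi_apply i))
    have hev : ∀ b : Fin (n + 1) → ℝ, {ω | ∀ j, j ≠ i → b j + Y j ω < b i + Y i ω} = J ⁻¹' S b := fun b => rfl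
    have hP : ∀ b : Fin (n + 1) → ℝ, (ℙ : Measure Ω) {ω | ∀ j, j ≠ i → b j + Y j ω < b i + Y i ω}
        = (Measure.pi fun _ : Fin (n + 1) => ρ) (S b) := by
      intro b
      rw [hev, ← hmap, Measure.map_apply hJmeas (hSmeas b)]
    set e := MeasurableEquiv.piFinSuccAbove (fun _ : Fin (n + 1) => ℝ) i with he
    set ν := Measure.pi fun _ : Fin n => ρ with hν
    have hmp : MeasurePreserving e.symm (ρ.prod ν) (Measure.pi fun _ : Fin (n + 1) => ρ) :=
      (measurePreserving_piFinSuccAbove (fun _ : Fin (n + 1) => ρ) i).symm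
    have hpi : ∀ b : Fin (n + 1) → ℝ, (Measure.pi fun _ : Fin (n + 1) => ρ) (S b) = (ρ.prod ν) (e.symm ⁻¹' S b) :=
      fun b => (hmp.measure_preimage_equiv (S b)).symm
    have hTmeas : ∀ b, MeasurableSet (e.symm ⁻¹' S b) := fun b => e.symm.measurable (hSmeas b)
    have hslice : ∀ (b : Fin (n + 1) → ℝ) (y : Fin n → ℝ), (fun t => (t, y)) ⁻¹' (e.symm ⁻¹' S b)
        = ⋂ k, Set.Ioi (b (i.succAbove k) + y k - b i) := by
      intro b y
      ext t
      simp only [Set.mem_preimage, hS, Set.mem_setOf_eq, Set.mem_iInter, Set.mem_Ioi]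
      have hsymm : e.symm (t, y) = i.insertNth t y := rfl
      constructor
      · intro hx k
        have := hx (i.succAbove k) (Fin.succAbove_ne i k)
        rw [hsymm, Fin.insertNth_apply_same, Fin.insertNth_apply_succAbove] at this
        linarith
      · intro hx j hj
        obtain ⟨k, rfl⟩ := Fin.exists_succAbove_eq hj
        rw [hsymm, Fin.insertNth_apply_same, Fin.insertNth_apply_succAbove]
        have := hx k
        linarith
    have hint : ∀ b : Fin (n + 1) → ℝ, (ℙ : Measure Ω) {ω | ∀ j, j ≠ i → b j + Y j ω < b i + Y i ω}
        = ∫⁻ y, ρ (⋂ k, Set.Ioi (b (i.succAbove k) + y k - b i)) ∂ν := by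
      intro b
      rw [hP, hpi, Measure.prod_apply_symm (hTmeas b)]
      exact lintegral_congr fun y => by rw [hslice]
    rw [hint, hint]
    calc ∫⁻ y, ρ (⋂ k, Set.Ioi (d' (i.succAbove k) + y k - d' i)) ∂ν
        ≤ ∫⁻ y, (ENNReal.ofReal (Real.exp ε) *
            ρ (⋂ k, Set.Ioi (d (i.succAbove k) + y k - d i)) + ENNReal.ofReal δ) ∂ν := by
          refine lintegral_mono fun y => ?_
          refine aux_slice ρ hpriv _ _ fun k => ?_
          have := hd (i.succAbove k)
          linarith
      _ = ENNReal.ofReal (Real.exp ε) *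
            ∫⁻ y, ρ (⋂ k, Set.Ioi (d (i.succAbove k) + y k - d i)) ∂ν + ENNReal.ofReal δ := by
          rw [lintegral_add_right _ measurable_const, lintegral_const,
            lintegral_const_mul' _ _ ENNReal.ofReal_ne_top]
          simp
  refine ⟨key c' c fun j => by have := hmono j; have := hlip i; linarith,
    key c c' fun j => by have := hlip j; have := hmono i; linarith⟩
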